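/- If a sequent Γ ⊢ Δ has a cut-free CLKID^ω proof, then it has a cut-free cycle-normal CLKID^ω_a proof. -/

import Mathlib

namespace CLKID

/-- Terms of the language: variables, the constant `0`, and the unary function `s`. -/
inductive Tm : Type where
  | var : ℕ → Tm
  | zero : Tm
  | s : Tm → Tm
deriving DecidableEq

/-- `sIter n t` is the term `s^n t`. -/
def sIter : ℕ → Tm → Tm
  | 0, t => t
  | n + 1, t => Tm.s (sIter n t)

/-- Substitution on terms. -/
def Tm.subst (θ : ℕ → Tm) : Tm → Tm
  | .var x => θ x
  | .zero => .zero
  | .s t => .s (t.subst θ)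

/-- Free variables of a term. -/
def Tm.fv : Tm → Set ℕ
  | .var x => {x}
  | .zero => ∅
  | .s t => t.fv

/-- Subterms of a term. -/
def Tm.sub : Tm → Set Tm
  | .var x => {Tm.var x}
  | .zero => {Tm.zero}
  | .s t => insert (Tm.s t) t.sub

/-- The variable of a term (`none` if the term is of the form `s^n 0`). -/
def Tm.varOf : Tm → Option ℕ
  | .var x => some x
  | .zero => none
  | .s t => t.varOf

/-- Formulas: equations, the two inductive-predicate atoms `Add1`/`Add2`,
    and the usual first-order connectives and quantifiers. -/
inductive Fm : Type where
  | eq : Tm → Tm → Fm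
  | add1 : Tm → Tm → Tm → Fm
  | add2 : Tm → Tm → Tm → Fm
  | not : Fm → Fm
  | and : Fm → Fm → Fm
  | or : Fm → Fm → Fm
  | imp : Fm → Fm → Fm
  | all : ℕ → Fm → Fm
  | ex : ℕ → Fm → Fm
deriving DecidableEq

/-- Substitution on formulas. -/
def Fm.subst (θ : ℕ → Tm) : Fm → Fm
  | .eq t u => .eq (t.subst θ) (u.subst θ)
  | .add1 a b c => .add1 (a.subst θ) (b.subst θ) (c.subst θ)
  | .add2 a b c => .add2 (a.subst θ) (b.subst θ) (c.subst θ)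
  | .not φ => .not (φ.subst θ)
  | .and φ ψ => .and (φ.subst θ) (ψ.subst θ)
  | .or φ ψ => .or (φ.subst θ) (ψ.subst θ)
  | .imp φ ψ => .imp (φ.subst θ) (ψ.subst θ)
  | .all x φ => .all x (φ.subst (Function.update θ x (Tm.var x)))
  | .ex x φ => .ex x (φ.subst (Function.update θ x (Tm.var x)))

/-- Free variables of a formula. -/
def Fm.fv : Fm → Set ℕ
  | .eq t u => t.fv ∪ u.fv
  | .add1 a b c => a.fv ∪ b.fv ∪ c.fv
  | .add2 a b c => a.fv ∪ b.fv ∪ c.fv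
  | .not φ => φ.fv
  | .and φ ψ => φ.fv ∪ ψ.fv
  | .or φ ψ => φ.fv ∪ ψ.fv
  | .imp φ ψ => φ.fv ∪ ψ.fv
  | .all x φ => φ.fv \ {x}
  | .ex x φ => φ.fv \ {x}

/-- Terms occurring in a formula. -/
def Fm.tms : Fm → Set Tm
  | .eq t u => t.sub ∪ u.sub
  | .add1 a b c => a.sub ∪ b.sub ∪ c.sub
  | .add2 a b c => a.sub ∪ b.sub ∪ c.sub
  | .not φ => φ.tms
  | .and φ ψ => φ.tms ∪ ψ.tms
  | .or φ ψ => φ.tms ∪ ψ.tms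
  | .imp φ ψ => φ.tms ∪ ψ.tms
  | .all _ φ => φ.tms
  | .ex _ φ => φ.tms

/-- The substitution `[x := t]`. -/
def sub1 (x : ℕ) (t : Tm) : ℕ → Tm := fun y => if y = x then t else Tm.var y

/-- The simultaneous substitution `[v1 := t, v2 := u]`. -/
def sub2 (v1 v2 : ℕ) (t u : Tm) : ℕ → Tm :=
  fun z => if z = v1 then t else if z = v2 then u else Tm.var z

/-- `≡_Γ`: the smallest congruence relation on terms containing all pairs `(t, u)`
    with the equation `t = u` in `Γ`. -/
inductive EqvTm (Γ : Set Fm) : Tm → Tm → Prop where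
  | base {t u : Tm} : Fm.eq t u ∈ Γ → EqvTm Γ t u
  | refl (t : Tm) : EqvTm Γ t t
  | symm {t u : Tm} : EqvTm Γ t u → EqvTm Γ u t
  | trans {t u v : Tm} : EqvTm Γ t u → EqvTm Γ u v → EqvTm Γ t v
  | sCongr {t u : Tm} : EqvTm Γ t u → EqvTm Γ (Tm.s t) (Tm.s u)

/-- `t ~_Γ u` : `s^n t ≡_Γ s^m u` for some naturals `n`, `m`. -/
def DepTm (Γ : Set Fm) (t u : Tm) : Prop := ∃ n m : ℕ, EqvTm Γ (sIter n t) (sIter m u)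

/-- A sequent: a pair of finite sets of formulas. -/
structure Seq where
  ant : Finset Fm
  suc : Finset Fm

/-- The antecedent of a sequent, as a set of formulas. -/
def antSet (S : Seq) : Set Fm := ↑S.ant

/-- `[Γ]` from Lemma on chains: `{ s^n t1 = s^n t2 | t1 = t2 ∈ Γ or t2 = t1 ∈ Γ }`. -/
def brkt (Γ : Set Fm) : Set Fm :=
  {φ | ∃ (n : ℕ) (t1 t2 : Tm), φ = Fm.eq (sIter n t1) (sIter n t2) ∧
        (Fm.eq t1 t2 ∈ Γ ∨ Fm.eq t2 t1 ∈ Γ)}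

/-- `B1(Γ ⊢ Δ)` : second arguments of `Add1` atoms in the consequent. -/
def B1 (S : Seq) : Set Tm := {b | ∃ a c, Fm.add1 a b c ∈ S.suc}

/-- `C(Γ ⊢ Δ)` : third arguments of `Add2` atoms in the antecedent
    or `Add1` atoms in the consequent. -/
def Cset (S : Seq) : Set Tm :=
  {c | (∃ a b, Fm.add2 a b c ∈ S.ant) ∨ (∃ a b, Fm.add1 a b c ∈ S.suc)}

/-- Index sequent. -/
def IndexSequent (S : Seq) : Prop :=
  (∀ t ∈ B1 S, ∀ u ∈ Cset S, ¬ DepTm (antSet S) t u) ∧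
  (∀ b ∈ B1 S, ∀ b' ∈ B1 S, ∀ n m : ℕ, EqvTm (antSet S) (sIter n b) (sIter m b') → n = m)

/-! ## The cyclic proof systems `CLKID^ω` and `CLKID^ω_a` -/

/-- Rule labels; each label carries the instance data needed to describe the
    rule application (principal formulas, substitutions, case variables, ...).
    `bud` labels bud leaves of cyclic derivation trees. -/
inductive Rule : Type where
  | ax
  | weak
  | cut (φ : Fm)
  | subst (θ : ℕ → Tm)
  | negL (φ : Fm)
  | negR (φ : Fm)
  | andL (φ ψ : Fm)
  | andR (φ ψ : Fm)
  | orL (φ ψ : Fm)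
  | orR (φ ψ : Fm)
  | impL (φ ψ : Fm)
  | impR (φ ψ : Fm)
  | allL (x : ℕ) (t : Tm) (φ : Fm)
  | allR (x : ℕ) (φ : Fm)
  | exL (x : ℕ) (φ : Fm)
  | exR (x : ℕ) (t : Tm) (φ : Fm)
  | eqR (t : Tm)
  | eqL (v1 v2 : ℕ) (t u : Tm)
  | eqLa (v1 v2 : ℕ) (t u : Tm)
  | add1R1
  | add1R2 (a b c : Tm)
  | add2R1
  | add2R2 (a b c : Tm)
  | caseAdd1 (a b c : Tm) (x y z : ℕ)
  | caseAdd2 (a b c : Tm) (x y z : ℕ)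
  | bud

/-- `Inf r S L` : the sequent `S` follows from the list of premises `L`
    by the rule (instance) `r`. -/
inductive Inf : Rule → Seq → List Seq → Prop where
  | ax {Γ Δ : Finset Fm} :
      (Γ ∩ Δ).Nonempty → Inf .ax ⟨Γ, Δ⟩ []
  | weak {Γ Δ Γ' Δ' : Finset Fm} :
      Γ' ⊆ Γ → Δ' ⊆ Δ → Inf .weak ⟨Γ, Δ⟩ [⟨Γ', Δ'⟩]
  | cut {Γ Δ : Finset Fm} {φ : Fm} :
      Inf (.cut φ) ⟨Γ, Δ⟩ [⟨Γ, insert φ Δ⟩, ⟨insert φ Γ, Δ⟩]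
  | subst {Γ Δ : Finset Fm} {θ : ℕ → Tm} :
      Inf (.subst θ) ⟨Γ.image (Fm.subst θ), Δ.image (Fm.subst θ)⟩ [⟨Γ, Δ⟩]
  | negL {Γ Δ : Finset Fm} {φ : Fm} :
      Inf (.negL φ) ⟨insert (.not φ) Γ, Δ⟩ [⟨Γ, insert φ Δ⟩]
  | negR {Γ Δ : Finset Fm} {φ : Fm} :
      Inf (.negR φ) ⟨Γ, insert (.not φ) Δ⟩ [⟨insert φ Γ, Δ⟩]
  | andL {Γ Δ : Finset Fm} {φ ψ : Fm} :
      Inf (.andL φ ψ) ⟨insert (.and φ ψ) Γ, Δ⟩ [⟨insert φ (insert ψ Γ), Δ⟩]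
  | andR {Γ Δ : Finset Fm} {φ ψ : Fm} :
      Inf (.andR φ ψ) ⟨Γ, insert (.and φ ψ) Δ⟩ [⟨Γ, insert φ Δ⟩, ⟨Γ, insert ψ Δ⟩]
  | orL {Γ Δ : Finset Fm} {φ ψ : Fm} :
      Inf (.orL φ ψ) ⟨insert (.or φ ψ) Γ, Δ⟩ [⟨insert φ Γ, Δ⟩, ⟨insert ψ Γ, Δ⟩]
  | orR {Γ Δ : Finset Fm} {φ ψ : Fm} :
      Inf (.orR φ ψ) ⟨Γ, insert (.or φ ψ) Δ⟩ [⟨Γ, insert φ (insert ψ Δ)⟩]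
  | impL {Γ Δ : Finset Fm} {φ ψ : Fm} :
      Inf (.impL φ ψ) ⟨insert (.imp φ ψ) Γ, Δ⟩ [⟨Γ, insert φ Δ⟩, ⟨insert ψ Γ, Δ⟩]
  | impR {Γ Δ : Finset Fm} {φ ψ : Fm} :
      Inf (.impR φ ψ) ⟨Γ, insert (.imp φ ψ) Δ⟩ [⟨insert φ Γ, insert ψ Δ⟩]
  | allL {Γ Δ : Finset Fm} {x : ℕ} {t : Tm} {φ : Fm} :
      Inf (.allL x t φ) ⟨insert (.all x φ) Γ, Δ⟩ [⟨insert (φ.subst (sub1 x t)) Γ, Δ⟩]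
  | allR {Γ Δ : Finset Fm} {x : ℕ} {φ : Fm} :
      (∀ ψ ∈ Γ ∪ Δ, x ∉ Fm.fv ψ) →
      Inf (.allR x φ) ⟨Γ, insert (.all x φ) Δ⟩ [⟨Γ, insert φ Δ⟩]
  | exL {Γ Δ : Finset Fm} {x : ℕ} {φ : Fm} :
      (∀ ψ ∈ Γ ∪ Δ, x ∉ Fm.fv ψ) →
      Inf (.exL x φ) ⟨insert (.ex x φ) Γ, Δ⟩ [⟨insert φ Γ, Δ⟩]
  | exR {Γ Δ : Finset Fm} {x : ℕ} {t : Tm} {φ : Fm} :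
      Inf (.exR x t φ) ⟨Γ, insert (.ex x φ) Δ⟩ [⟨Γ, insert (φ.subst (sub1 x t)) Δ⟩]
  | eqR {Γ Δ : Finset Fm} {t : Tm} :
      Inf (.eqR t) ⟨Γ, insert (.eq t t) Δ⟩ []
  | eqL {Γ Δ : Finset Fm} {v1 v2 : ℕ} {t u : Tm} :
      Inf (.eqL v1 v2 t u)
        ⟨insert (.eq t u) (Γ.image (Fm.subst (sub2 v1 v2 t u))),
          Δ.image (Fm.subst (sub2 v1 v2 t u))⟩
        [⟨Γ.image (Fm.subst (sub2 v1 v2 u t)), Δ.image (Fm.subst (sub2 v1 v2 u t))⟩]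
  | eqLa {Γ Δ : Finset Fm} {v1 v2 : ℕ} {t u : Tm} :
      Inf (.eqLa v1 v2 t u)
        ⟨insert (.eq t u) (Γ.image (Fm.subst (sub2 v1 v2 t u))),
          Δ.image (Fm.subst (sub2 v1 v2 t u))⟩
        [⟨insert (.eq t u) (Γ.image (Fm.subst (sub2 v1 v2 u t))),
          Δ.image (Fm.subst (sub2 v1 v2 u t))⟩]
  | add1R1 {Γ Δ : Finset Fm} {b : Tm} :
      Inf .add1R1 ⟨Γ, insert (.add1 .zero b b) Δ⟩ []
  | add1R2 {Γ Δ : Finset Fm} {a b c : Tm} :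
      Inf (.add1R2 a b c) ⟨Γ, insert (.add1 (.s a) b (.s c)) Δ⟩ [⟨Γ, insert (.add1 a b c) Δ⟩]
  | add2R1 {Γ Δ : Finset Fm} {b : Tm} :
      Inf .add2R1 ⟨Γ, insert (.add2 .zero b b) Δ⟩ []
  | add2R2 {Γ Δ : Finset Fm} {a b c : Tm} :
      Inf (.add2R2 a b c) ⟨Γ, insert (.add2 (.s a) b c) Δ⟩ [⟨Γ, insert (.add2 a (.s b) c) Δ⟩]
  | caseAdd1 {Γ Δ : Finset Fm} {a b c : Tm} {x y z : ℕ} :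
      x ≠ y → x ≠ z → y ≠ z →
      (∀ ψ ∈ insert (Fm.add1 a b c) (Γ ∪ Δ), x ∉ Fm.fv ψ ∧ y ∉ Fm.fv ψ ∧ z ∉ Fm.fv ψ) →
      Inf (.caseAdd1 a b c x y z) ⟨insert (.add1 a b c) Γ, Δ⟩
        [⟨insert (.eq a .zero) (insert (.eq b (.var y)) (insert (.eq c (.var y)) Γ)), Δ⟩,
         ⟨insert (.eq a (.s (.var x))) (insert (.eq b (.var y)) (insert (.eq c (.s (.var z)))
            (insert (.add1 (.var x) (.var y) (.var z)) Γ))), Δ⟩]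
  | caseAdd2 {Γ Δ : Finset Fm} {a b c : Tm} {x y z : ℕ} :
      x ≠ y → x ≠ z → y ≠ z →
      (∀ ψ ∈ insert (Fm.add2 a b c) (Γ ∪ Δ), x ∉ Fm.fv ψ ∧ y ∉ Fm.fv ψ ∧ z ∉ Fm.fv ψ) →
      Inf (.caseAdd2 a b c x y z) ⟨insert (.add2 a b c) Γ, Δ⟩
        [⟨insert (.eq a .zero) (insert (.eq b (.var y)) (insert (.eq c (.var y)) Γ)), Δ⟩,
         ⟨insert (.eq a (.s (.var x))) (insert (.eq b (.var y)) (insert (.eq c (.var z))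
            (insert (.add2 (.var x) (.s (.var y)) (.var z)) Γ))), Δ⟩]

/-- A labeling of tree nodes (finite sequences of naturals) by sequents and rules;
    `none` means the node is not in the tree. -/
abbrev Lbl : Type := List ℕ → Option (Seq × Rule)

/-- The children of `σ` are labeled exactly by the premise list `prems`. -/
def childrenOK (f : Lbl) (σ : List ℕ) (prems : List Seq) : Prop :=
  (∀ i : Fin prems.length, ∃ r', f (σ ++ [(i : ℕ)]) = some (prems.get i, r')) ∧
  (∀ i : ℕ, prems.length ≤ i → f (σ ++ [i]) = none)

/-- Derivation trees (possibly infinite): prefix-closed domain, each non-bud node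
    is the conclusion of a rule whose premises label its children, buds are leaves. -/
structure DTree where
  label : Lbl
  root_def : label [] ≠ none
  prefix_closed : ∀ σ τ : List ℕ, label (σ ++ τ) ≠ none → label σ ≠ none
  wf : ∀ σ S r, label σ = some (S, r) →
    (r = Rule.bud ∧ ∀ i : ℕ, label (σ ++ [i]) = none) ∨
    (r ≠ Rule.bud ∧ ∃ prems, Inf r S prems ∧ childrenOK label σ prems)

/-- `σ` is a bud of the labeling `f`. -/
def budAt (f : Lbl) (σ : List ℕ) : Prop := ∃ S, f σ = some (S, Rule.bud)

/-- `σ` is an inner node of `f` labeled with the sequent `S`. -/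
def innerWith (f : Lbl) (σ : List ℕ) (S : Seq) : Prop :=
  ∃ r, f σ = some (S, r) ∧ r ≠ Rule.bud

/-- A pre-proof: a finite derivation tree together with a function assigning to
    each bud a companion, i.e. an inner node labeled with the same sequent. -/
structure PreProof where
  D : DTree
  fin : {σ : List ℕ | D.label σ ≠ none}.Finite
  C : List ℕ → List ℕ
  comp : ∀ σ S, D.label σ = some (S, Rule.bud) → innerWith D.label (C σ) S

/-- Cycle-normality: every companion is an ancestor of its bud. -/
def PreProof.CycleNormal (P : PreProof) : Prop :=
  ∀ σ S, P.D.label σ = some (S, Rule.bud) → P.C σ <+: σ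

/-- `T` is the tree-unfolding of the pre-proof `P`: it agrees with `P.D` on
    non-bud nodes, below a bud it continues as below the bud's companion, and it
    is empty on nodes not in `P.D` having no bud prefix. -/
def IsUnfolding (P : PreProof) (T : Lbl) : Prop :=
  (∀ σ, P.D.label σ ≠ none → ¬ budAt P.D.label σ → T σ = P.D.label σ) ∧
  (∀ σ₁ σ₂ : List ℕ, budAt P.D.label σ₁ → T (σ₁ ++ σ₂) = T (P.C σ₁ ++ σ₂)) ∧
  (∀ σ, P.D.label σ = none → (∀ σ₁, σ₁ <+: σ → ¬ budAt P.D.label σ₁) → T σ = none)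

/-- An infinite path in the labeling `f`. -/
def IsInfPath (f : Lbl) (p : ℕ → List ℕ) : Prop :=
  (∀ i, f (p i) ≠ none) ∧ (∀ i, ∃ n : ℕ, p (i + 1) = p i ++ [n])

/-- Atomic formulas with an inductive predicate. -/
def isIndAtom (φ : Fm) : Prop :=
  (∃ a b c, φ = Fm.add1 a b c) ∨ (∃ a b c, φ = Fm.add2 a b c)

/-- A progressing trace step: the traced formula is the principal formula of a
    case rule and its successor (in the corresponding case distinction, child `j`)
    is a case-descendant. -/
def progStep : Rule → ℕ → Fm → Fm → Prop := fun r j τ τ' =>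
  match r with
  | .caseAdd1 a b c x y z =>
      τ = Fm.add1 a b c ∧ j = 1 ∧ τ' = Fm.add1 (.var x) (.var y) (.var z)
  | .caseAdd2 a b c x y z =>
      τ = Fm.add2 a b c ∧ j = 1 ∧ τ' = Fm.add2 (.var x) (.s (.var y)) (.var z)
  | _ => False

/-- The trace connection relation between the traced formula at a conclusion of a
    rule `r` and the traced formula at its `j`-th premise. -/
def connStep : Rule → ℕ → Fm → Fm → Prop := fun r j τ τ' =>
  match r with
  | .subst θ => τ = Fm.subst θ τ'
  | .eqL v1 v2 t u =>
      ∃ F : Fm, τ = Fm.subst (sub2 v1 v2 t u) F ∧ τ' = Fm.subst (sub2 v1 v2 u t) F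
  | .eqLa v1 v2 t u =>
      ∃ F : Fm, τ = Fm.subst (sub2 v1 v2 t u) F ∧ τ' = Fm.subst (sub2 v1 v2 u t) F
  | .caseAdd1 a b c x y z => τ' = τ ∨ progStep (.caseAdd1 a b c x y z) j τ τ'
  | .caseAdd2 a b c x y z => τ' = τ ∨ progStep (.caseAdd2 a b c x y z) j τ τ'
  | _ => τ' = τ

/-- `τ` is a trace following the tail from `k` of the path `p` in `f`. -/
def IsTraceFrom (f : Lbl) (p : ℕ → List ℕ) (k : ℕ) (τ : ℕ → Fm) : Prop :=
  ∀ i, k ≤ i →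
    ∃ (S : Seq) (r : Rule) (j : ℕ), f (p i) = some (S, r) ∧ τ i ∈ S.ant ∧ isIndAtom (τ i) ∧
      p (i + 1) = p i ++ [j] ∧ connStep r j (τ i) (τ (i + 1))

/-- The trace `τ` progresses at position `i` of the path `p`. -/
def progAt (f : Lbl) (p : ℕ → List ℕ) (τ : ℕ → Fm) (i : ℕ) : Prop :=
  ∃ (S : Seq) (r : Rule) (j : ℕ), f (p i) = some (S, r) ∧ p (i + 1) = p i ++ [j] ∧
    progStep r j (τ i) (τ (i + 1))

/-- The global trace condition for a (possibly infinite) labeling `f`. -/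
def GTC (f : Lbl) : Prop :=
  ∀ p : ℕ → List ℕ, IsInfPath f p →
    ∃ (k : ℕ) (τ : ℕ → Fm), IsTraceFrom f p k τ ∧
      ∀ n : ℕ, ∃ i, n ≤ i ∧ k ≤ i ∧ progAt f p τ i

/-- A pre-proof is a proof when its tree-unfolding satisfies the
    global trace condition. -/
def PreProof.IsProof (P : PreProof) : Prop := ∃ T : Lbl, IsUnfolding P T ∧ GTC T

/-- Some rule satisfying `Q` occurs in the labeling `f`. -/
def usesRule (f : Lbl) (Q : Rule → Prop) : Prop := ∃ σ S r, f σ = some (S, r) ∧ Q r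

/-- No occurrence of (Cut). -/
def PreProof.CutFree (P : PreProof) : Prop :=
  ¬ usesRule P.D.label (fun r => ∃ φ, r = Rule.cut φ)

/-- No occurrence of (= L_a): the pre-proof is a `CLKID^ω` pre-proof. -/
def PreProof.NoEqLa (P : PreProof) : Prop :=
  ¬ usesRule P.D.label (fun r => ∃ v1 v2 t u, r = Rule.eqLa v1 v2 t u)

/-- No occurrence of (= L): the pre-proof is a `CLKID^ω_a` pre-proof. -/
def PreProof.NoEqL (P : PreProof) : Prop :=
  ¬ usesRule P.D.label (fun r => ∃ v1 v2 t u, r = Rule.eqL v1 v2 t u)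

/-- The conclusion of the pre-proof is the sequent `S`. -/
def PreProof.Concl (P : PreProof) (S : Seq) : Prop := ∃ r, P.D.label [] = some (S, r)

/-- Provability in `CLKID^ω`. -/
def ProvableW (S : Seq) : Prop :=
  ∃ P : PreProof, P.IsProof ∧ P.NoEqLa ∧ P.Concl S

/-- Provability in `CLKID^ω_a`. -/
def ProvableWa (S : Seq) : Prop :=
  ∃ P : PreProof, P.IsProof ∧ P.NoEqL ∧ P.Concl S

/-- Cut-free provability in `CLKID^ω`. -/
def CutFreeProvableW (S : Seq) : Prop :=
  ∃ P : PreProof, P.IsProof ∧ P.CutFree ∧ P.NoEqLa ∧ P.Concl S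

/-- The sequent `Add2(x, y, z) ⊢ Add1(x, y, z)`. -/
def goalSeq : Seq :=
  ⟨{Fm.add2 (Tm.var 0) (Tm.var 1) (Tm.var 2)}, {Fm.add1 (Tm.var 0) (Tm.var 1) (Tm.var 2)}⟩

/-- A cut-free cycle-normal `CLKID^ω_a` proof of `Add2(x,y,z) ⊢ Add1(x,y,z)`. -/
def IsCNProofOfGoal (P : PreProof) : Prop :=
  P.IsProof ∧ P.CutFree ∧ P.NoEqL ∧ P.CycleNormal ∧ P.Concl goalSeq

/-- The index of an `Add2` atom with second argument `b` in the sequent `S` is `⊥`. -/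
def IndexBot (S : Seq) (b : Tm) : Prop :=
  ∀ a' b' c', Fm.add1 a' b' c' ∈ S.suc → ¬ DepTm (antSet S) b b'

/-- `σ` is a switching point of `f`: the conclusion of a `(Case Add2)` rule whose
    principal formula has index `⊥`. -/
def SwitchingPoint (f : Lbl) (σ : List ℕ) : Prop :=
  ∃ S a b c x y z, f σ = some (S, Rule.caseAdd2 a b c x y z) ∧ IndexBot S b

/-- `σ` is the conclusion of a `(Case Add2)` rule in `f`. -/
def CaseAdd2At (f : Lbl) (σ : List ℕ) : Prop :=
  ∃ S a b c x y z, f σ = some (S, Rule.caseAdd2 a b c x y z)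

/-- The node `σ` of `f` is labeled with an index sequent. -/
def IndexSequentAt (f : Lbl) (σ : List ℕ) : Prop :=
  ∃ S r, f σ = some (S, r) ∧ IndexSequent S

/-- A finite index path `p 0, …, p N` in `f`:  its first sequent is an index
    sequent, and a step to the left premise (child `0`) of a `(Case Add2)` rule
    only happens at switching points. -/
def IsIndexPathUpTo (f : Lbl) (p : ℕ → List ℕ) (N : ℕ) : Prop :=
  (∀ i, i ≤ N → f (p i) ≠ none) ∧
  (∀ i, i < N → ∃ n : ℕ, p (i + 1) = p i ++ [n]) ∧
  IndexSequentAt f (p 0) ∧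
  (∀ i, i < N → CaseAdd2At f (p i) → p (i + 1) = p i ++ [0] → SwitchingPoint f (p i))

/-- An infinite index path in `f`. -/
def IsInfIndexPath (f : Lbl) (p : ℕ → List ℕ) : Prop :=
  IsInfPath f p ∧
  IndexSequentAt f (p 0) ∧
  (∀ i, CaseAdd2At f (p i) → p (i + 1) = p i ++ [0] → SwitchingPoint f (p i))

/-- The child index chosen by the rightmost path: the right assumption of
    `(Case Add2)`, the unique premise otherwise. -/
def rightIdx : Rule → ℕ := fun r =>
  match r with
  | .caseAdd2 _ _ _ _ _ _ => 1
  | _ => 0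

/-- One step of the rightmost path in `f`. -/
def RightStep (f : Lbl) (σ σ' : List ℕ) : Prop :=
  ∃ S r, f σ = some (S, r) ∧ σ' = σ ++ [rightIdx r] ∧ f σ' ≠ none

/-- `A(Γ ⊢ Δ)` of Lemma `abc_relations`. -/
def Aset (S : Seq) : Set Tm :=
  {a | (∃ b c, Fm.add2 a b c ∈ S.ant) ∨ (∃ b c, Fm.add1 a b c ∈ S.suc) ∨ a = Tm.zero}

/-- `BC(Γ ⊢ Δ)` of Lemma `abc_relations`. -/
def BCset (S : Seq) : Set Tm :=
  {t | (∃ a c, Fm.add2 a t c ∈ S.ant) ∨ (∃ a b, Fm.add2 a b t ∈ S.ant) ∨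
       (∃ a c, Fm.add1 a t c ∈ S.suc) ∨ (∃ a b, Fm.add1 a b t ∈ S.suc)}

/-- The rules that can occur in a cut-free cycle-normal `CLKID^ω_a` proof of
    `Add2(x,y,z) ⊢ Add1(x,y,z)` (plus bud labels). -/
def allowedRule (r : Rule) : Prop :=
  r = Rule.bud ∨ r = Rule.weak ∨ (∃ θ, r = Rule.subst θ) ∨
  (∃ v1 v2 t u, r = Rule.eqLa v1 v2 t u) ∨
  (∃ a b c x y z, r = Rule.caseAdd2 a b c x y z) ∨
  r = Rule.add1R1 ∨ (∃ a b c, r = Rule.add1R2 a b c)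
/-! ## Auxiliary development for cycle normalization -/

namespace CNAux

open Classical

variable (P : PreProof)

/-- Walk nodes: a node address of `P.D` together with a flag marking the inserted
    weakening stage after an `(= L)` node. -/
abbrev V : Type := List ℕ × Bool

/-- Step to the `i`-th child in `P.D`, jumping from buds to their companions. -/
def goChild (σ : List ℕ) (i : ℕ) : Option V :=
  match P.D.label (σ ++ [i]) with
  | none => none
  | some (_, Rule.bud) => some (P.C (σ ++ [i]), false)
  | some (_, _) => some (σ ++ [i], false)

/-- One step of the walk. -/
def vstep (v : V) (i : ℕ) : Option V :=
  match v with
  | (σ, true) => if i = 0 then goChild P σ 0 else none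
  | (σ, false) =>
    match P.D.label σ with
    | some (_, Rule.eqL _ _ _ _) => if i = 0 then some (σ, true) else none
    | some (_, _) => goChild P σ i
    | none => none

/-- The starting node. -/
def v0 : V :=
  match P.D.label [] with
  | some (_, Rule.bud) => (P.C [], false)
  | _ => ([], false)

def estep : Option V → ℕ → Option V := fun ov i => ov.bind (fun v => vstep P v i)

/-- The endpoint of the walk along `α`. -/
def endV (α : List ℕ) : Option V := α.foldl (estep P) (some (v0 P))

/-- `σ` is an inner node of `P.D`. -/
def InnerAt (σ : List ℕ) : Prop := ∃ S r, P.D.label σ = some (S, r) ∧ r ≠ Rule.bud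

/-- Invariant of walk nodes. -/
def VInv : V → Prop
  | (σ, false) => InnerAt P σ
  | (σ, true) => ∃ S x1 x2 t u, P.D.label σ = some (S, Rule.eqL x1 x2 t u) ∧
      P.D.label (σ ++ [0]) ≠ none

/-- The sequent labeling a walk node. -/
def vSeq : V → Option Seq
  | (σ, false) => (P.D.label σ).map (·.1)
  | (σ, true) =>
    match P.D.label σ with
    | some (_, Rule.eqL _ _ t u) =>
        (P.D.label (σ ++ [0])).map (fun q => ⟨insert (Fm.eq t u) q.1.ant, q.1.suc⟩)
    | _ => none

/-- Replacing `(= L)` by `(= L_a)`. -/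
def convert : Rule → Rule
  | .eqL a b c d => .eqLa a b c d
  | r => r

/-- The rule labeling a walk node. -/
def vRule : V → Rule
  | (σ, false) => match P.D.label σ with | some (_, r) => convert r | none => Rule.weak
  | (_, true) => Rule.weak

lemma convert_ne_bud {r : Rule} (h : r ≠ Rule.bud) : convert r ≠ Rule.bud := by
  cases r <;> simp [convert] at h ⊢

lemma convert_eq_self {r : Rule} (h : ∀ a b c d, r ≠ Rule.eqL a b c d) : convert r = r := by
  cases r <;> first | rfl | exact absurd rfl (h _ _ _ _)

lemma convert_cut {r : Rule} {φ : Fm} (h : convert r = Rule.cut φ) : r = Rule.cut φ := by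
  cases r <;> simp_all [convert]

lemma convert_ne_eqL (r : Rule) (a b c d : ℕ × ℕ × Tm × Tm) :
    convert r ≠ Rule.eqL a.1 a.2.1 a.2.2.1 a.2.2.2 := by
  cases r <;> simp [convert]

/- basic endV lemmas -/
lemma foldl_estep_none (l : List ℕ) : List.foldl (estep P) none l = none := by
  induction l with
  | nil => rfl
  | cons a l ih => simpa [estep] using ih

lemma endV_nil : endV P [] = some (v0 P) := rfl

lemma endV_append (α β : List ℕ) : endV P (α ++ β) = β.foldl (estep P) (endV P α) := by
  simp [endV, List.foldl_append]

lemma endV_concat (α : List ℕ) (i : ℕ) :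
    endV P (α ++ [i]) = estep P (endV P α) i := by
  simp [endV_append]

lemma endV_mono_none {α : List ℕ} (h : endV P α = none) (β : List ℕ) :
    endV P (α ++ β) = none := by
  rw [endV_append, h, foldl_estep_none]

lemma endV_prefix_ne {α β : List ℕ} (h : β <+: α) (hα : endV P α ≠ none) :
    endV P β ≠ none := by
  obtain ⟨γ, rfl⟩ := h
  intro hβ
  exact hα (endV_mono_none P hβ γ)

/- goChild lemmas -/
lemma goChild_none {σ : List ℕ} {i : ℕ} (h : P.D.label (σ ++ [i]) = none) :
    goChild P σ i = none := by simp [goChild, h]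

lemma goChild_isSome {σ : List ℕ} {i : ℕ} {w : V} (h : goChild P σ i = some w) :
    P.D.label (σ ++ [i]) ≠ none := by
  intro hn; rw [goChild_none P hn] at h; exact nomatch h

/-- Structure of a successful `goChild` step. -/
lemma goChild_spec {σ : List ℕ} {i : ℕ} {w : V} (h : goChild P σ i = some w) :
    ∃ S' r' r'', P.D.label (σ ++ [i]) = some (S', r') ∧
      P.D.label w.1 = some (S', r'') ∧ r'' ≠ Rule.bud ∧ w.2 = false := by
  rcases hl : P.D.label (σ ++ [i]) with _ | ⟨S', r'⟩
  · rw [goChild_none P hl] at h; exact nomatch h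
  · by_cases hb : r' = Rule.bud
    · subst hb
      have hw : w = (P.C (σ ++ [i]), false) := by
        simp [goChild, hl] at h; exact h.symm
      obtain ⟨r'', hr1, hr2⟩ := P.comp _ _ hl
      exact ⟨S', Rule.bud, r'', rfl, by rw [hw]; exact hr1, hr2, by rw [hw]⟩
    · have hw : w = (σ ++ [i], false) := by
        cases r' <;> simp_all [goChild, hl]
      exact ⟨S', r', r', rfl, by rw [hw]; exact hl, hb, by rw [hw]⟩

lemma vSeq_of_goChild {σ : List ℕ} {i : ℕ} {w : V} {S' : Seq} {r' : Rule}
    (h : goChild P σ i = some w) (hl : P.D.label (σ ++ [i]) = some (S', r')) :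
    vSeq P w = some S' ∧ VInv P w := by
  obtain ⟨S'', r2, r3, hl2, hw1, hw3, hw4⟩ := goChild_spec P h
  rw [hl] at hl2
  simp only [Option.some.injEq, Prod.mk.injEq] at hl2
  obtain ⟨rfl, rfl⟩ := hl2
  obtain ⟨τ, b⟩ := w
  cases b
  · exact ⟨by simp [vSeq, hw1], ⟨S', r3, hw1, hw3⟩⟩
  · simp at hw4

/- vstep computation lemmas -/
lemma vstep_true (σ : List ℕ) (i : ℕ) :
    vstep P (σ, true) i = if i = 0 then goChild P σ 0 else none := rfl

lemma vstep_false_eqL {σ : List ℕ} {S : Seq} {x1 x2 : ℕ} {t u : Tm}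
    (hσ : P.D.label σ = some (S, Rule.eqL x1 x2 t u)) (i : ℕ) :
    vstep P (σ, false) i = if i = 0 then some (σ, true) else none := by
  simp [vstep, hσ]

lemma vstep_false_of_ne {σ : List ℕ} {S : Seq} {r : Rule}
    (hσ : P.D.label σ = some (S, r)) (hr : ∀ a b c d, r ≠ Rule.eqL a b c d) (i : ℕ) :
    vstep P (σ, false) i = goChild P σ i := by
  cases r <;> simp [vstep, hσ] <;> exact absurd rfl (hr _ _ _ _)

lemma vstep_false_none {σ : List ℕ} (hσ : P.D.label σ = none) (i : ℕ) :
    vstep P (σ, false) i = none := by simp [vstep, hσ]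

/-- Case analysis of a successful step from a `false`-flagged node. -/
lemma vstep_false_spec {σ : List ℕ} {i : ℕ} {w : V}
    (h : vstep P (σ, false) i = some w) :
    (∃ S x1 x2 t u, P.D.label σ = some (S, Rule.eqL x1 x2 t u) ∧ i = 0 ∧ w = (σ, true)) ∨
    ((∃ S r, P.D.label σ = some (S, r) ∧ ∀ a b c d, r ≠ Rule.eqL a b c d) ∧
      goChild P σ i = some w ∧ w.2 = false) := by
  rcases hσ : P.D.label σ with _ | ⟨S, r⟩
  · rw [vstep_false_none P hσ] at h; exact nomatch h
  · by_cases he : ∃ x1 x2 t u, r = Rule.eqL x1 x2 t u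
    · obtain ⟨x1, x2, t, u, rfl⟩ := he
      rw [vstep_false_eqL P hσ] at h
      by_cases hi : i = 0
      · subst hi; simp at h
        exact Or.inl ⟨S, x1, x2, t, u, rfl, rfl, h.symm⟩
      · rw [if_neg hi] at h; exact nomatch h
    · push_neg at he
      rw [vstep_false_of_ne P hσ (fun a b c d hc => (he a b c d) hc)] at h
      obtain ⟨_, _, _, _, _, _, hw⟩ := goChild_spec P h
      exact Or.inr ⟨⟨S, r, rfl, fun a b c d hc => (he a b c d) hc⟩, h, hw⟩

lemma vstep_true_spec {σ : List ℕ} {i : ℕ} {w : V}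
    (h : vstep P (σ, true) i = some w) :
    i = 0 ∧ goChild P σ 0 = some w ∧ w.2 = false := by
  rw [vstep_true] at h
  by_cases hi : i = 0
  · subst hi; simp at h
    obtain ⟨_, _, _, _, _, _, hw⟩ := goChild_spec P h
    exact ⟨rfl, h, hw⟩
  · rw [if_neg hi] at h; exact nomatch h

/-- `VInv` holds at the start. -/
lemma vinv_v0 : VInv P (v0 P) := by
  rcases hl : P.D.label [] with _ | ⟨S, r⟩
  · exact absurd hl P.D.root_def
  · by_cases hb : r = Rule.bud
    · subst hb
      have hv : v0 P = (P.C [], false) := by simp [v0, hl]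
      obtain ⟨r', hr1, hr2⟩ := P.comp _ _ hl
      rw [hv]; exact ⟨S, r', hr1, hr2⟩
    · have hv : v0 P = ([], false) := by cases r <;> simp_all [v0, hl]
      rw [hv]; exact ⟨S, r, hl, hb⟩

/-- Inner nodes have valid rule applications. -/
lemma wf_inner {σ : List ℕ} {S : Seq} {r : Rule}
    (hσ : P.D.label σ = some (S, r)) (hr : r ≠ Rule.bud) :
    ∃ prems, Inf r S prems ∧ childrenOK P.D.label σ prems := by
  rcases P.D.wf σ S r hσ with ⟨hb, _⟩ | ⟨_, h⟩
  · exact absurd hb hr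
  · exact h

/-- An `(=L)` node has a child. -/
lemma eqL_child {σ : List ℕ} {S : Seq} {x1 x2 : ℕ} {t u : Tm}
    (hσ : P.D.label σ = some (S, Rule.eqL x1 x2 t u)) :
    ∃ Γ Δ : Finset Fm,
      S = ⟨insert (Fm.eq t u) (Γ.image (Fm.subst (sub2 x1 x2 t u))),
            Δ.image (Fm.subst (sub2 x1 x2 t u))⟩ ∧
      (∃ r0, P.D.label (σ ++ [0]) =
        some (⟨Γ.image (Fm.subst (sub2 x1 x2 u t)), Δ.image (Fm.subst (sub2 x1 x2 u t))⟩, r0)) ∧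
      (∀ i : ℕ, 1 ≤ i → P.D.label (σ ++ [i]) = none) := by
  obtain ⟨prems, hinf, hok⟩ := wf_inner P hσ (by simp)
  cases hinf with
  | eqL =>
    rename_i Γ Δ
    refine ⟨Γ, Δ, rfl, ?_, ?_⟩
    · obtain ⟨r0, h0⟩ := hok.1 ⟨0, by simp⟩
      exact ⟨r0, by simpa using h0⟩
    · intro i hi
      exact hok.2 i (by simpa using hi)

/-- `vstep` preserves the invariant. -/
lemma vinv_step {v w : V} {i : ℕ} (hv : VInv P v) (h : vstep P v i = some w) :
    VInv P w := by
  obtain ⟨σ, b⟩ := v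
  cases b
  · rcases vstep_false_spec P h with ⟨S, x1, x2, t, u, hσ, _, rfl⟩ | ⟨_, hgo, _⟩
    · obtain ⟨Γ, Δ, _, ⟨r0, h0⟩, _⟩ := eqL_child P hσ
      exact ⟨S, x1, x2, t, u, hσ, by rw [h0]; exact fun hc => nomatch hc⟩
    · obtain ⟨S', r', r'', _, hw1, hw2, hw3⟩ := goChild_spec P hgo
      obtain ⟨τ, c⟩ := w
      simp only at hw3
      subst hw3
      exact ⟨S', r'', hw1, hw2⟩
  · obtain ⟨_, hgo, hw3⟩ := vstep_true_spec P h
    obtain ⟨S', r', r'', _, hw1, hw2, _⟩ := goChild_spec P hgo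
    obtain ⟨τ, c⟩ := w
    simp only at hw3
    subst hw3
    exact ⟨S', r'', hw1, hw2⟩

/-- The endpoint of any defined walk satisfies the invariant. -/
lemma vinv_endV {α : List ℕ} {v : V} (h : endV P α = some v) : VInv P v := by
  induction α using List.reverseRecOn generalizing v with
  | nil => rw [endV_nil] at h; injection h with h; rw [← h]; exact vinv_v0 P
  | append_singleton β i ih =>
    rw [endV_concat] at h
    rcases hβ : endV P β with _ | w
    · rw [hβ] at h; exact nomatch h
    · rw [hβ] at h
      exact vinv_step P (ih hβ) h

/-- `vSeq` is defined on invariant nodes. -/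
lemma vSeq_isSome {v : V} (hv : VInv P v) : ∃ S, vSeq P v = some S := by
  obtain ⟨σ, b⟩ := v
  cases b
  · obtain ⟨S, r, hσ, _⟩ := hv
    exact ⟨S, by simp [vSeq, hσ]⟩
  · obtain ⟨S, x1, x2, t, u, hσ, h0⟩ := hv
    rcases h0' : P.D.label (σ ++ [0]) with _ | ⟨S0, r0⟩
    · exact absurd h0' h0
    · exact ⟨⟨insert (Fm.eq t u) S0.ant, S0.suc⟩, by simp [vSeq, hσ, h0']⟩

lemma vRule_ne_bud {v : V} (hv : VInv P v) : vRule P v ≠ Rule.bud := by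
  obtain ⟨σ, b⟩ := v
  cases b
  · obtain ⟨S, r, hσ, hr⟩ := hv
    simpa [vRule, hσ] using convert_ne_bud hr
  · simp [vRule]

/-! ### The normalized tree -/

/-- The endpoint of `α` repeats an earlier endpoint. -/
def Dup (α : List ℕ) : Prop := ∃ k, k < α.length ∧ endV P (α.take k) = endV P α

/-- `α` is a live node of the normalized tree. -/
def Live (α : List ℕ) : Prop :=
  endV P α ≠ none ∧ ∀ β, β <+: α → β ≠ α → ¬ Dup P β

/-- The labeling of the normalized tree. -/
noncomputable def label' : Lbl := fun α =>
  if Live P α then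
    (endV P α).bind fun v => (vSeq P v).map fun S =>
      (S, if Dup P α then Rule.bud else vRule P v)
  else none

lemma prefix_of_prefix_concat {α β : List ℕ} {i : ℕ}
    (h : β <+: α ++ [i]) (hne : β ≠ α ++ [i]) : β <+: α := by
  have hlen : β.length ≤ α.length := by
    have h1 := h.length_le
    simp only [List.length_append, List.length_singleton] at h1
    rcases Nat.lt_or_ge β.length (α.length + 1) with h2 | h2
    · omega
    · exfalso
      have : β.length = (α ++ [i]).length := by simp; omega
      exact hne (List.prefix_iff_eq_take.mp h ▸ by
        rw [this, List.take_length])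
  exact List.prefix_of_prefix_length_le h (List.prefix_append α [i]) hlen

lemma live_prefix {α β : List ℕ} (hα : Live P α) (h : β <+: α) : Live P β := by
  refine ⟨endV_prefix_ne P h hα.1, fun γ hγ hne => ?_⟩
  by_cases hg : γ = α
  · subst hg
    have : γ = β := hγ.eq_of_length_le (hγ.length_le.antisymm h.length_le ▸ le_refl _)
    exact absurd this hne
  · exact hα.2 γ (hγ.trans h) hg

lemma live_nil : Live P [] := by
  refine ⟨by rw [endV_nil]; exact fun hc => (nomatch hc), fun β hβ hne => ?_⟩
  exact absurd (List.prefix_nil.mp hβ) hne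

lemma label'_of_endV_none {α : List ℕ} (h : endV P α = none) : label' P α = none := by
  unfold label'
  split
  · rw [h]; rfl
  · rfl

lemma label'_live {α : List ℕ} (hl : Live P α) :
    ∃ v S, endV P α = some v ∧ vSeq P v = some S ∧
      label' P α = some (S, if Dup P α then Rule.bud else vRule P v) := by
  rcases hv : endV P α with _ | v
  · exact absurd hv hl.1
  · obtain ⟨S, hS⟩ := vSeq_isSome P (vinv_endV P hv)
    exact ⟨v, S, rfl, hS, by rw [label', if_pos hl, hv, Option.bind_some, hS]; rfl⟩

lemma label'_ne_none_iff {α : List ℕ} : label' P α ≠ none ↔ Live P α := by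
  constructor
  · intro h
    by_contra hl
    rw [label', if_neg hl] at h
    exact h rfl
  · intro hl
    obtain ⟨v, S, _, _, h3⟩ := label'_live P hl
    rw [h3]
    exact fun hc => nomatch hc

lemma live_extend {α : List ℕ} {i : ℕ} (hα : Live P α) (hnd : ¬ Dup P α)
    (h : endV P (α ++ [i]) ≠ none) : Live P (α ++ [i]) := by
  refine ⟨h, fun β hβ hne => ?_⟩
  have hβα : β <+: α := prefix_of_prefix_concat hβ hne
  by_cases hb : β = α
  · subst hb; exact hnd
  · exact hα.2 β hβα hb

lemma goChild_some_of_label {σ : List ℕ} {i : ℕ} {S' : Seq} {r' : Rule}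
    (hl : P.D.label (σ ++ [i]) = some (S', r')) :
    ∃ w, goChild P σ i = some w ∧ vSeq P w = some S' ∧ VInv P w := by
  have : ∃ w, goChild P σ i = some w := by
    unfold goChild
    rw [hl]
    cases r' <;> exact ⟨_, rfl⟩
  obtain ⟨w, hw⟩ := this
  obtain ⟨h1, h2⟩ := vSeq_of_goChild P hw hl
  exact ⟨w, hw, h1, h2⟩

lemma endV_child {α : List ℕ} {v : V} (hv : endV P α = some v) (i : ℕ) :
    endV P (α ++ [i]) = vstep P v i := by
  rw [endV_concat, hv]; rfl

/-- childrenOK for a single premise. -/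
lemma childrenOK_singleton {f : Lbl} {σ : List ℕ} {S1 : Seq}
    (h0 : ∃ r', f (σ ++ [0]) = some (S1, r'))
    (h1 : ∀ i : ℕ, 1 ≤ i → f (σ ++ [i]) = none) :
    childrenOK f σ [S1] := by
  constructor
  · intro i
    have h2 : (i : ℕ) = 0 := by
      have h3 := i.isLt
      simp only [List.length_singleton] at h3
      omega
    have hg : [S1].get i = S1 := by
      rcases i with ⟨_ | n, hlt⟩
      · rfl
      · simp only [List.length_singleton] at hlt; omega
    rw [hg, h2]
    exact h0
  · exact h1

/-- A live non-repeating node has a valid rule application in the new tree. -/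
lemma label'_wf {α : List ℕ} {v : V} {S : Seq}
    (hl : Live P α) (hnd : ¬ Dup P α) (hv : endV P α = some v) (hS : vSeq P v = some S) :
    ∃ prems, Inf (vRule P v) S prems ∧ childrenOK (label' P) α prems := by
  have hinv := vinv_endV P hv
  obtain ⟨σ, b⟩ := v
  cases b
  · -- ordinary node
    obtain ⟨Sσ, rσ, hσ, hrb⟩ := hinv
    have hSeq : S = Sσ := by
      simp [vSeq, hσ] at hS; exact hS.symm
    subst hSeq
    have hvr : vRule P (σ, false) = convert rσ := by simp [vRule, hσ]
    by_cases he : ∃ x1 x2 t u, rσ = Rule.eqL x1 x2 t u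
    · -- (= L) node: becomes (= L_a) with a weakening child
      obtain ⟨x1, x2, t, u, rfl⟩ := he
      obtain ⟨Γ, Δ, hSform, ⟨r0, h0⟩, hrest⟩ := eqL_child P hσ
      rw [hvr]
      have hconv : convert (Rule.eqL x1 x2 t u) = Rule.eqLa x1 x2 t u := rfl
      rw [hconv, hSform]
      refine ⟨[⟨insert (Fm.eq t u) (Γ.image (Fm.subst (sub2 x1 x2 u t))),
                Δ.image (Fm.subst (sub2 x1 x2 u t))⟩], Inf.eqLa,
        childrenOK_singleton ?_ ?_⟩
      · have hstep : endV P (α ++ [0]) = some (σ, true) := by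
          rw [endV_child P hv, vstep_false_eqL P hσ, if_pos rfl]
        have hlive : Live P (α ++ [0]) := live_extend P hl hnd (by rw [hstep]; simp)
        have hseq : vSeq P (σ, true) =
            some ⟨insert (Fm.eq t u) (Γ.image (Fm.subst (sub2 x1 x2 u t))),
                  Δ.image (Fm.subst (sub2 x1 x2 u t))⟩ := by
          simp [vSeq, hσ, h0]
        obtain ⟨v', S', hv', hS', hlab⟩ := label'_live P hlive
        rw [hstep] at hv'
        injection hv' with hv'
        rw [← hv', hseq] at hS'
        injection hS' with hS'
        exact ⟨_, by rw [hlab, ← hS']⟩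
      · intro i hi
        apply label'_of_endV_none
        rw [endV_child P hv, vstep_false_eqL P hσ, if_neg (by omega)]
    · -- non-(= L) node: same rule
      push_neg at he
      have hne : ∀ a b c d, rσ ≠ Rule.eqL a b c d := fun a b c d hc => (he a b c d) hc
      rw [hvr, convert_eq_self hne]
      obtain ⟨prems, hinf, hok⟩ := wf_inner P hσ hrb
      refine ⟨prems, hinf, ?_, ?_⟩
      · intro i
        obtain ⟨ri, hri⟩ := hok.1 i
        obtain ⟨w, hgo, hwseq, _⟩ := goChild_some_of_label P hri
        have hstep : endV P (α ++ [(i : ℕ)]) = some w := by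
          rw [endV_child P hv, vstep_false_of_ne P hσ hne]; exact hgo
        have hlive : Live P (α ++ [(i : ℕ)]) := live_extend P hl hnd (by rw [hstep]; simp)
        obtain ⟨v', S', hv', hS', hlab⟩ := label'_live P hlive
        rw [hstep] at hv'
        injection hv' with hv'
        rw [← hv', hwseq] at hS'
        injection hS' with hS'
        exact ⟨_, by rw [hlab, ← hS']⟩
      · intro i hi
        apply label'_of_endV_none
        rw [endV_child P hv, vstep_false_of_ne P hσ hne, goChild_none P (hok.2 i hi)]
  · -- weakening node
    obtain ⟨Sσ, x1, x2, t, u, hσ, h0⟩ := hinv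
    rcases h0' : P.D.label (σ ++ [0]) with _ | ⟨S0, r0⟩
    · exact absurd h0' h0
    · have hSeq : S = ⟨insert (Fm.eq t u) S0.ant, S0.suc⟩ := by
        simp [vSeq, hσ, h0'] at hS; exact hS.symm
      have hvr : vRule P (σ, true) = Rule.weak := rfl
      rw [hvr, hSeq]
      refine ⟨[⟨S0.ant, S0.suc⟩],
        Inf.weak (Finset.subset_insert _ _) (le_refl _),
        childrenOK_singleton ?_ ?_⟩
      · obtain ⟨w, hgo, hwseq, _⟩ := goChild_some_of_label P h0'
        have hstep : endV P (α ++ [0]) = some w := by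
          rw [endV_child P hv, vstep_true, if_pos rfl]; exact hgo
        have hlive : Live P (α ++ [0]) := live_extend P hl hnd (by rw [hstep]; simp)
        obtain ⟨v', S', hv', hS', hlab⟩ := label'_live P hlive
        rw [hstep] at hv'
        injection hv' with hv'
        rw [← hv', hwseq] at hS'
        injection hS' with hS'
        exact ⟨_, by rw [hlab, ← hS']⟩
      · intro i hi
        apply label'_of_endV_none
        rw [endV_child P hv, vstep_true, if_neg (by omega)]

/-- The normalized derivation tree. -/
noncomputable def D' : DTree where
  label := label' P
  root_def := by
    rw [label'_ne_none_iff]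
    exact live_nil P
  prefix_closed := by
    intro σ τ h
    rw [label'_ne_none_iff] at h ⊢
    exact live_prefix P h (List.prefix_append σ τ)
  wf := by
    intro α S r h
    have hlive : Live P α := by
      rw [← label'_ne_none_iff]
      rw [h]; exact fun hc => nomatch hc
    obtain ⟨v, S', hv, hS', hlab⟩ := label'_live P hlive
    rw [h] at hlab
    injection hlab with hlab
    injection hlab with hS1 hr1
    subst hS1
    subst hr1
    by_cases hd : Dup P α
    · left
      refine ⟨if_pos hd, fun i => ?_⟩
      rw [label', if_neg ?_]
      intro hlc
      exact (hlc.2 α (List.prefix_append α [i]) (by simp)) hd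
    · right
      rw [if_neg hd]
      exact ⟨vRule_ne_bud P (vinv_endV P hv), label'_wf P hlive hd hv hS'⟩

/-! ### Finiteness -/

lemma endV_label_ne {α : List ℕ} {v : V} (h : endV P α = some v) :
    P.D.label v.1 ≠ none := by
  have hinv := vinv_endV P h
  obtain ⟨σ, b⟩ := v
  cases b
  · obtain ⟨S, r, hσ, _⟩ := hinv
    rw [hσ]; exact fun hc => nomatch hc
  · obtain ⟨S, _, _, _, _, hσ, _⟩ := hinv
    rw [hσ]; exact fun hc => nomatch hc

lemma finite_lists (I : Finset ℕ) :
    ∀ N : ℕ, {l : List ℕ | l.length ≤ N ∧ ∀ x ∈ l, x ∈ I}.Finite := by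
  intro N
  induction N with
  | zero =>
    apply Set.Finite.subset (Set.finite_singleton ([] : List ℕ))
    rintro l ⟨h1, _⟩
    simp only [Nat.le_zero, List.length_eq_zero_iff] at h1
    simp [h1]
  | succ N ih =>
    apply Set.Finite.subset
      (Set.Finite.insert ([] : List ℕ)
        (Set.Finite.image2 (· :: ·) I.finite_toSet ih))
    rintro l ⟨h1, h2⟩
    cases l with
    | nil => exact Set.mem_insert _ _
    | cons a t =>
      apply Set.mem_insert_of_mem
      refine Set.mem_image2_of_mem (h2 a (by simp)) ⟨?_, ?_⟩
      · simpa using h1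
      · exact fun x hx => h2 x (by simp [hx])

/-- Bound on the length of live nodes. -/
lemma live_length_le {α : List ℕ} (hl : Live P α) :
    α.length ≤ ((P.fin.toFinset ×ˢ (Finset.univ : Finset Bool)).image
      (some : V → Option V)).card := by
  classical
  rw [← Finset.card_range α.length]
  apply Finset.card_le_card_of_injOn (fun k => endV P (α.take k))
  · intro k hk
    rw [Finset.coe_range, Set.mem_Iio] at hk
    rcases hv : endV P (α.take k) with _ | v
    · exact absurd hv (endV_prefix_ne P (List.take_prefix k α) hl.1)
    · simp only [Finset.mem_coe, hv]; apply Finset.mem_image_of_mem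
      rw [Finset.mem_product]
      refine ⟨?_, Finset.mem_univ _⟩
      rw [Set.Finite.mem_toFinset]
      exact endV_label_ne P hv
  · intro k1 hk1 k2 hk2 he
    simp only [Finset.coe_range, Set.mem_Iio] at hk1 hk2
    by_contra hne
    rcases Nat.lt_or_ge k1 k2 with hlt | hge
    · refine hl.2 (α.take k2) (List.take_prefix _ _) ?_ ⟨k1, ?_, ?_⟩
      · intro hc
        have := congrArg List.length hc
        simp only [List.length_take] at this
        omega
      · simp only [List.length_take]; omega
      · rw [List.take_take, min_eq_left (by omega)]; exact he
    · have hlt : k2 < k1 := by omega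
      refine hl.2 (α.take k1) (List.take_prefix _ _) ?_ ⟨k2, ?_, ?_⟩
      · intro hc
        have := congrArg List.length hc
        simp only [List.length_take] at this
        omega
      · simp only [List.length_take]; omega
      · rw [List.take_take, min_eq_left (by omega)]; exact he.symm

/-- Entries of live nodes come from a fixed finite set. -/
lemma live_entry_mem {α : List ℕ} (hl : Live P α) {x : ℕ} (hx : x ∈ α) :
    x ∈ insert 0 (P.fin.toFinset.image (fun l => l.getLastD 0)) := by
  classical
  obtain ⟨β, γ, rfl⟩ := List.append_of_mem hx
  have hpre : β ++ [x] <+: β ++ x :: γ := ⟨γ, by simp⟩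
  have hne : endV P (β ++ [x]) ≠ none := endV_prefix_ne P hpre hl.1
  rcases hv : endV P (β ++ [x]) with _ | w
  · exact absurd hv hne
  · rw [endV_concat] at hv
    rcases hβ : endV P β with _ | v
    · rw [hβ] at hv; exact nomatch hv
    · rw [hβ] at hv
      have hv' : vstep P v x = some w := hv
      obtain ⟨σ, b⟩ := v
      have hgo : x = 0 ∨ goChild P σ x = some w := by
        cases b
        · rcases vstep_false_spec P hv' with ⟨_, _, _, _, _, _, h, _⟩ | ⟨_, h, _⟩
          · exact Or.inl h
          · exact Or.inr h
        · obtain ⟨h, h2, _⟩ := vstep_true_spec P hv'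
          subst h
          exact Or.inr h2
      rcases hgo with rfl | hgo
      · exact Finset.mem_insert_self _ _
      · apply Finset.mem_insert_of_mem
        rw [Finset.mem_image]
        refine ⟨σ ++ [x], ?_, ?_⟩
        · rw [Set.Finite.mem_toFinset]
          exact goChild_isSome P hgo
        · simp

/-- The domain of the new labeling is finite. -/
lemma label'_fin : {α : List ℕ | label' P α ≠ none}.Finite := by
  classical
  apply Set.Finite.subset
    (finite_lists (insert 0 (P.fin.toFinset.image (fun l => l.getLastD 0)))
      (((P.fin.toFinset ×ˢ (Finset.univ : Finset Bool)).image
        (some : V → Option V)).card))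
  intro α hα
  rw [Set.mem_setOf_eq, label'_ne_none_iff] at hα
  exact ⟨live_length_le P hα, fun x hx => live_entry_mem P hα hx⟩

/-! ### The normalized pre-proof -/

/-- The companion function. -/
noncomputable def C' : List ℕ → List ℕ := fun α =>
  if h : ∃ k, k < α.length ∧ endV P (α.take k) = endV P α
  then α.take (Nat.find h) else []

lemma label'_bud_spec {α : List ℕ} {S : Seq} (h : label' P α = some (S, Rule.bud)) :
    Live P α ∧ Dup P α ∧ ∃ v, endV P α = some v ∧ vSeq P v = some S := by
  have hlive : Live P α := by
    rw [← label'_ne_none_iff P, h]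
    exact fun hc => nomatch hc
  obtain ⟨v, S', hv, hS', hlab⟩ := label'_live P hlive
  rw [h] at hlab
  injection hlab with hlab
  injection hlab with hS1 hr1
  by_cases hd : Dup P α
  · exact ⟨hlive, hd, v, hv, by rw [hS', hS1]⟩
  · rw [if_neg hd] at hr1
    exact absurd hr1.symm (vRule_ne_bud P (vinv_endV P hv))

lemma C'_spec {α : List ℕ} {S : Seq} (h : label' P α = some (S, Rule.bud)) :
    C' P α <+: α ∧ endV P (C' P α) = endV P α ∧ innerWith (label' P) (C' P α) S := by
  obtain ⟨hlive, hd, v, hv, hS⟩ := label'_bud_spec P h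
  have hex : ∃ k, k < α.length ∧ endV P (α.take k) = endV P α := hd
  have hC : C' P α = α.take (Nat.find hex) := dif_pos hex
  obtain ⟨hklen, hke⟩ := Nat.find_spec hex
  set k := Nat.find hex with hk
  have htp : α.take k <+: α := List.take_prefix _ _
  have hnd : ¬ Dup P (α.take k) := by
    rintro ⟨j, hj, hje⟩
    rw [List.length_take, min_eq_left (by omega)] at hj
    rw [List.take_take, min_eq_left (by omega)] at hje
    exact Nat.find_min hex hj ⟨by omega, by rw [hje, hke]⟩
  have hlive' : Live P (α.take k) := live_prefix P hlive htp
  obtain ⟨v', S', hv', hS', hlab'⟩ := label'_live P hlive'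
  rw [hke, hv] at hv'
  injection hv' with hv'
  rw [← hv', hS] at hS'
  injection hS' with hS'
  refine ⟨by rw [hC]; exact htp, by rw [hC]; exact hke, ?_⟩
  rw [hC]
  refine ⟨vRule P v', by rw [hlab', if_neg hnd, ← hS'], ?_⟩
  rw [← hv']
  exact vRule_ne_bud P (vinv_endV P (by rw [hke]; exact hv))

/-- The normalized pre-proof. -/
noncomputable def P' : PreProof where
  D := D' P
  fin := label'_fin P
  C := C' P
  comp := fun σ S h => (C'_spec P h).2.2

lemma P'_cycleNormal : (P' P).CycleNormal := fun σ S h => (C'_spec P h).1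

lemma P'_cutFree (h : P.CutFree) : (P' P).CutFree := by
  rintro ⟨α, S, r, hlab0, φ, rfl⟩
  have hlab : label' P α = some (S, Rule.cut φ) := hlab0
  have hlive : Live P α := by
    rw [← label'_ne_none_iff P, hlab]
    exact fun hc => nomatch hc
  obtain ⟨v, S', hv, hS', hlab'⟩ := label'_live P hlive
  rw [hlab] at hlab'
  injection hlab' with hlab'
  injection hlab' with hS1 hr1
  by_cases hd : Dup P α
  · rw [if_pos hd] at hr1; exact nomatch hr1
  · rw [if_neg hd] at hr1
    obtain ⟨σ, b⟩ := v
    cases b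
    · rcases hσ : P.D.label σ with _ | ⟨Sσ, rσ⟩
      · exact absurd hσ (endV_label_ne P hv)
      · have : convert rσ = Rule.cut φ := by
          have : vRule P (σ, false) = convert rσ := by simp [vRule, hσ]
          rw [← this, ← hr1]
        exact h ⟨σ, Sσ, rσ, hσ, φ, convert_cut this⟩
    · have : vRule P (σ, true) = Rule.weak := rfl
      rw [this] at hr1
      exact nomatch hr1

lemma P'_noEqL : (P' P).NoEqL := by
  rintro ⟨α, S, r, hlab0, x1, x2, t, u, rfl⟩
  have hlab : label' P α = some (S, Rule.eqL x1 x2 t u) := hlab0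
  have hlive : Live P α := by
    rw [← label'_ne_none_iff P, hlab]
    exact fun hc => nomatch hc
  obtain ⟨v, S', hv, hS', hlab'⟩ := label'_live P hlive
  rw [hlab] at hlab'
  injection hlab' with hlab'
  injection hlab' with hS1 hr1
  by_cases hd : Dup P α
  · rw [if_pos hd] at hr1; exact nomatch hr1
  · rw [if_neg hd] at hr1
    obtain ⟨σ, b⟩ := v
    cases b
    · rcases hσ : P.D.label σ with _ | ⟨Sσ, rσ⟩
      · exact absurd hσ (endV_label_ne P hv)
      · have hvr : vRule P (σ, false) = convert rσ := by simp [vRule, hσ]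
        rw [hvr] at hr1
        cases rσ <;> simp [convert] at hr1
    · have : vRule P (σ, true) = Rule.weak := rfl
      rw [this] at hr1
      exact nomatch hr1

lemma P'_concl {S : Seq} (h : P.Concl S) : (P' P).Concl S := by
  obtain ⟨r, hr⟩ := h
  have hseq : vSeq P (v0 P) = some S := by
    by_cases hb : r = Rule.bud
    · subst hb
      have hv : v0 P = (P.C [], false) := by simp [v0, hr]
      obtain ⟨r', hr1, hr2⟩ := P.comp _ _ hr
      rw [hv]; simp [vSeq, hr1]
    · have hv : v0 P = ([], false) := by cases r <;> simp_all [v0, hr]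
      rw [hv]; simp [vSeq, hr]
  obtain ⟨v, S', hv, hS', hlab⟩ := label'_live P (live_nil P)
  rw [endV_nil] at hv
  injection hv with hv
  rw [← hv, hseq] at hS'
  injection hS' with hS'
  refine ⟨if Dup P [] then Rule.bud else vRule P v, ?_⟩
  show label' P [] = _
  rw [hlab, ← hS']

/-! ### The unfolding of the normalized pre-proof -/

/-- The tree-unfolding of the normalized pre-proof. -/
noncomputable def T' : Lbl := fun α =>
  (endV P α).bind fun v => (vSeq P v).map fun S => (S, vRule P v)

lemma T'_of_endV_none {α : List ℕ} (h : endV P α = none) : T' P α = none := by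
  simp [T', h]

lemma T'_some {α : List ℕ} {v : V} (hv : endV P α = some v) :
    ∃ S, vSeq P v = some S ∧ T' P α = some (S, vRule P v) := by
  obtain ⟨S, hS⟩ := vSeq_isSome P (vinv_endV P hv)
  exact ⟨S, hS, by simp [T', hv, hS]⟩

lemma budAt_label'_iff {α : List ℕ} :
    budAt (label' P) α ↔ Live P α ∧ Dup P α := by
  constructor
  · rintro ⟨S, hS⟩
    obtain ⟨h1, h2, _⟩ := label'_bud_spec P hS
    exact ⟨h1, h2⟩
  · rintro ⟨h1, h2⟩
    obtain ⟨v, S, hv, hS, hlab⟩ := label'_live P h1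
    exact ⟨S, by rw [hlab, if_pos h2]⟩

lemma T'_isUnfolding : IsUnfolding (P' P) (T' P) := by
  refine ⟨?_, ?_, ?_⟩
  · -- agrees on non-bud nodes
    intro α hne hnb
    have hne' : label' P α ≠ none := hne
    have hlive : Live P α := (label'_ne_none_iff P).mp hne'
    have hnd : ¬ Dup P α := fun hd => hnb ((budAt_label'_iff P).mpr ⟨hlive, hd⟩)
    obtain ⟨v, S, hv, hS, hlab⟩ := label'_live P hlive
    obtain ⟨S2, hS2, hT⟩ := T'_some P hv
    rw [hS] at hS2
    injection hS2 with hS2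
    show T' P α = label' P α
    rw [hT, hlab, if_neg hnd, hS2]
  · -- buds continue as companions
    intro α₁ α₂ hbud
    obtain ⟨S, hS⟩ := hbud
    have hS' : label' P α₁ = some (S, Rule.bud) := hS
    have hE : endV P (C' P α₁) = endV P α₁ := (C'_spec P hS').2.1
    show T' P (α₁ ++ α₂) = T' P (C' P α₁ ++ α₂)
    unfold T'
    rw [endV_append, endV_append, hE]
  · -- empty elsewhere
    intro α hnone hnb
    have hnone' : label' P α = none := hnone
    have hnl : ¬ Live P α := by
      intro hl
      exact (label'_ne_none_iff P).mpr hl hnone'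
    rcases he : endV P α with _ | v
    · exact T'_of_endV_none P he
    · exfalso
      have hα : endV P α ≠ none := by rw [he]; exact fun hc => nomatch hc
      have hex : ∃ k, Dup P (α.take k) := by
        by_contra hno
        push_neg at hno
        apply hnl
        refine ⟨hα, fun β hβ hne' => ?_⟩
        rw [List.prefix_iff_eq_take.mp hβ]
        exact hno β.length
      set k0 := Nat.find hex with hk0
      have hQ : Dup P (α.take k0) := Nat.find_spec hex
      have hlive0 : Live P (α.take k0) := by
        refine ⟨endV_prefix_ne P (List.take_prefix _ _) hα, fun γ hγ hne' => ?_⟩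
        have hγlen : γ.length < (α.take k0).length := by
          rcases Nat.lt_or_ge γ.length (α.take k0).length with h1 | h1
          · exact h1
          · exact absurd (hγ.eq_of_length_le h1) hne'
        have h2 : (α.take k0).length ≤ k0 := by simp [List.length_take]
        have hγk : γ.length ≤ k0 := by omega
        have hγeq := List.prefix_iff_eq_take.mp (hγ.trans (List.take_prefix k0 α))
        rw [hγeq]
        apply Nat.find_min hex
        rw [← hk0]
        omega
      exact hnb (α.take k0) (List.take_prefix _ _)
        ((budAt_label'_iff P).mpr ⟨hlive0, hQ⟩)

/-! ### Auxiliary lemmas for the GTC transfer -/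

lemma goChild_cases {σ : List ℕ} {i : ℕ} {w : V} (h : goChild P σ i = some w) :
    (∃ S', P.D.label (σ ++ [i]) = some (S', Rule.bud) ∧ w = (P.C (σ ++ [i]), false)) ∨
    (∃ S' r', P.D.label (σ ++ [i]) = some (S', r') ∧ r' ≠ Rule.bud ∧ w = (σ ++ [i], false)) := by
  rcases hl : P.D.label (σ ++ [i]) with _ | ⟨S', r'⟩
  · rw [goChild_none P hl] at h; exact nomatch h
  · by_cases hb : r' = Rule.bud
    · subst hb
      refine Or.inl ⟨S', rfl, ?_⟩
      simp [goChild, hl] at h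
      exact h.symm
    · refine Or.inr ⟨S', r', rfl, hb, ?_⟩
      cases r' <;> simp_all [goChild, hl]

lemma vstep_false_spec' {v w : V} {i : ℕ} (hf : v.2 = false)
    (h : vstep P v i = some w) :
    (∃ S x1 x2 t u, P.D.label v.1 = some (S, Rule.eqL x1 x2 t u) ∧ i = 0 ∧ w = (v.1, true)) ∨
    ((∃ S r, P.D.label v.1 = some (S, r) ∧ ∀ a b c d, r ≠ Rule.eqL a b c d) ∧
      goChild P v.1 i = some w ∧ w.2 = false) := by
  obtain ⟨σ, b⟩ := v
  simp only at hf
  subst hf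
  exact vstep_false_spec P h

lemma vstep_true_spec' {v w : V} {i : ℕ} (hf : v.2 = true)
    (h : vstep P v i = some w) :
    i = 0 ∧ goChild P v.1 0 = some w ∧ w.2 = false := by
  obtain ⟨σ, b⟩ := v
  simp only at hf
  subst hf
  exact vstep_true_spec P h

lemma vinv_innerAt {v : V} (hf : v.2 = false) (hinv : VInv P v) : InnerAt P v.1 := by
  obtain ⟨σ, b⟩ := v
  simp only at hf
  subst hf
  exact hinv

lemma vSeq_false {v : V} {S : Seq} {r : Rule} (hf : v.2 = false)
    (hσ : P.D.label v.1 = some (S, r)) : vSeq P v = some S := by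
  obtain ⟨σ, b⟩ := v
  simp only at hf
  subst hf
  simp [vSeq, hσ]

lemma vRule_false {v : V} {S : Seq} {r : Rule} (hf : v.2 = false)
    (hσ : P.D.label v.1 = some (S, r)) : vRule P v = convert r := by
  obtain ⟨σ, b⟩ := v
  simp only at hf
  subst hf
  simp [vRule, hσ]

lemma vSeq_true {v : V} {S S0 : Seq} {x1 x2 : ℕ} {t u : Tm} {r0 : Rule} (hf : v.2 = true)
    (hσ : P.D.label v.1 = some (S, Rule.eqL x1 x2 t u))
    (h0 : P.D.label (v.1 ++ [0]) = some (S0, r0)) :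
    vSeq P v = some ⟨insert (Fm.eq t u) S0.ant, S0.suc⟩ := by
  obtain ⟨σ, b⟩ := v
  simp only at hf
  subst hf
  simp only at hσ h0
  simp [vSeq, hσ, h0]

lemma vRule_true {v : V} (hf : v.2 = true) : vRule P v = Rule.weak := by
  obtain ⟨σ, b⟩ := v
  simp only at hf
  subst hf
  rfl

lemma progStep_not_eqL {r : Rule} {j : ℕ} {a b : Fm} (h : progStep r j a b) :
    ∀ x1 x2 t u, r ≠ Rule.eqL x1 x2 t u := by
  intro x1 x2 t u hc
  subst hc
  exact h

/-- The global trace condition transfers to the normalized unfolding. -/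
lemma T'_GTC (T : Lbl) (hU : IsUnfolding P T) (hG : GTC T) : GTC (T' P) := by
  intro p hp
  obtain ⟨hpne, hpstep⟩ := hp
  -- endpoints along the path
  have hv : ∀ i, ∃ v, endV P (p i) = some v := by
    intro i
    rcases he : endV P (p i) with _ | v
    · exact absurd (T'_of_endV_none P he) (hpne i)
    · exact ⟨v, rfl⟩
  choose vv hvv using hv
  choose n hn using hpstep
  have hstep : ∀ i, vstep P (vv i) (n i) = some (vv (i + 1)) := by
    intro i
    have h1 : endV P (p (i + 1)) = some (vv (i + 1)) := hvv (i + 1)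
    rw [hn i, endV_concat, hvv i] at h1
    exact h1
  have hvinv : ∀ i, VInv P (vv i) := fun i => vinv_endV P (hvv i)
  -- the weakening flag alternates back to false
  have hflstep : ∀ i, (vv i).2 = true → (vv (i + 1)).2 = false := by
    intro i hf
    exact (vstep_true_spec' P hf (hstep i)).2.2
  -- starting offset
  set i0 : ℕ := if (vv 0).2 = true then 1 else 0 with hi0def
  have hfl0 : (vv i0).2 = false := by
    by_cases h0 : (vv 0).2 = true
    · rw [hi0def, if_pos h0]
      exact hflstep 0 h0
    · rw [hi0def, if_neg h0]
      simpa using h0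
  -- the reindexing m
  set m : ℕ → ℕ :=
    fun k => Nat.rec i0 (fun _ mk => if (vv (mk + 1)).2 = true then mk + 2 else mk + 1) k
    with hmdef
  have hm0 : m 0 = i0 := rfl
  have hmS : ∀ k, m (k + 1) = if (vv (m k + 1)).2 = true then m k + 2 else m k + 1 :=
    fun _ => rfl
  have hmlt : ∀ k, m k < m (k + 1) := by
    intro k
    rw [hmS k]
    split <;> omega
  have hmle : ∀ a b, a ≤ b → m a ≤ m b := by
    intro a b hab
    induction hab with
    | refl => exact le_refl _
    | step _ ih => exact le_trans ih (le_of_lt (hmlt _))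
  have hkm : ∀ k, k ≤ m k := by
    intro k
    induction k with
    | zero => exact Nat.zero_le _
    | succ k ih => have := hmlt k; omega
  -- all m-positions have false flag
  have hflm : ∀ k, (vv (m k)).2 = false := by
    intro k
    induction k with
    | zero => exact hfl0
    | succ k ih =>
      rw [hmS k]
      by_cases hf : (vv (m k + 1)).2 = true
      · rw [if_pos hf]
        exact hflstep _ hf
      · rw [if_neg hf]
        simpa using hf
  -- the projected path in T
  set q : ℕ → List ℕ :=
    fun k => Nat.rec ((vv (m 0)).1)
      (fun k' qk => qk ++ [if (vv (m k' + 1)).2 = true then 0 else n (m k')]) k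
    with hqdef
  have hqS : ∀ k, q (k + 1) =
      q k ++ [if (vv (m k + 1)).2 = true then 0 else n (m k)] := fun _ => rfl
  have hTlab : ∀ σ, InnerAt P σ → T σ = P.D.label σ := by
    intro σ hσ
    obtain ⟨S, r, hl, hr⟩ := hσ
    apply hU.1
    · rw [hl]; exact fun hc => nomatch hc
    · rintro ⟨S2, hS2⟩
      rw [hl] at hS2
      injection hS2 with hS2
      injection hS2 with _ h2
      exact hr h2
  -- the key invariant
  have hinv : ∀ k γ, T (q k ++ γ) = T ((vv (m k)).1 ++ γ) := by
    intro k
    induction k with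
    | zero => intro γ; rfl
    | succ k ih =>
      intro γ
      by_cases hf : (vv (m k + 1)).2 = true
      · -- detour through the weakening node
        have hm2 : m (k + 1) = m k + 2 := by rw [hmS k, if_pos hf]
        have hs1 := hstep (m k)
        rcases vstep_false_spec' P (hflm k) hs1 with
          ⟨S, a, b, c, d, hσ, hn0, hw⟩ | ⟨_, _, hw2⟩
        · have hs2 := hstep (m k + 1)
          obtain ⟨hn1, hgo2, _⟩ := vstep_true_spec' P (by rw [hw]) hs2
          rw [hw] at hgo2
          simp only at hgo2
          have hq1 : q (k + 1) ++ γ = q k ++ ([0] ++ γ) := by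
            rw [hqS k, if_pos hf, List.append_assoc]
          rw [hq1, ih ([0] ++ γ), ← List.append_assoc]
          have hmm : (vv (m (k + 1))).1 = (vv (m k + 2)).1 := by rw [hm2]
          rcases goChild_cases P hgo2 with ⟨S', hlb, hwc⟩ | ⟨S', r', hlb, hrb, hwc⟩
          · rw [hmm, hwc]
            exact hU.2.1 _ γ ⟨S', hlb⟩
          · rw [hmm, hwc]
        · rw [hw2] at hf
          exact absurd hf (by simp)
      · -- direct step
        have hm1 : m (k + 1) = m k + 1 := by rw [hmS k, if_neg hf]
        have hs1 := hstep (m k)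
        rcases vstep_false_spec' P (hflm k) hs1 with
          ⟨S, a, b, c, d, hσ, hn0, hw⟩ | ⟨_, hgo, hw2⟩
        · rw [hw] at hf
          exact absurd rfl hf
        · have hq1 : q (k + 1) ++ γ = q k ++ ([n (m k)] ++ γ) := by
            rw [hqS k, if_neg hf, List.append_assoc]
          rw [hq1, ih ([n (m k)] ++ γ), ← List.append_assoc]
          have hmm : (vv (m (k + 1))).1 = (vv (m k + 1)).1 := by rw [hm1]
          rcases goChild_cases P hgo with ⟨S', hlb, hwc⟩ | ⟨S', r', hlb, hrb, hwc⟩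
          · rw [hmm, hwc]
            exact hU.2.1 _ γ ⟨S', hlb⟩
          · rw [hmm, hwc]
  have hTq : ∀ k, T (q k) = P.D.label ((vv (m k)).1) := by
    intro k
    have h1 := hinv k []
    simp only [List.append_nil] at h1
    rw [h1]
    exact hTlab _ (vinv_innerAt P (hflm k) (hvinv (m k)))
  have hqpath : IsInfPath T q := by
    constructor
    · intro k
      rw [hTq k]
      obtain ⟨S, r, hl, _⟩ := vinv_innerAt P (hflm k) (hvinv (m k))
      rw [hl]
      exact fun hc => nomatch hc
    · intro k
      exact ⟨_, hqS k⟩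
  obtain ⟨k₀, τ, htr, hprog⟩ := hG q hqpath
  -- the inverse reindexing K
  set K : ℕ → ℕ :=
    fun i => Nat.rec 0 (fun j kj => if m (kj + 1) ≤ j + 1 then kj + 1 else kj) i
    with hKdef
  have hK0 : K 0 = 0 := rfl
  have hKS : ∀ i, K (i + 1) = if m (K i + 1) ≤ i + 1 then K i + 1 else K i := fun _ => rfl
  have hKinv : ∀ i, i0 ≤ i → m (K i) ≤ i ∧ i < m (K i + 1) := by
    intro i hi
    induction i, hi using Nat.le_induction with
    | base =>
      have hm1 := hmlt 0
      by_cases h0 : (vv 0).2 = true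
      · have hi01 : i0 = 1 := by rw [hi0def, if_pos h0]
        have hm01 : m 0 = 1 := by rw [hm0, hi01]
        have hK1 : K 1 = 0 := by
          show K (0 + 1) = 0
          rw [hKS 0, hK0, if_neg (by omega)]
        rw [hi01, hK1]
        refine ⟨by omega, ?_⟩
        show 1 < m (0 + 1)
        omega
      · have hi00 : i0 = 0 := by rw [hi0def, if_neg h0]
        have hm00 : m 0 = 0 := by rw [hm0, hi00]
        rw [hi00, hK0]
        refine ⟨by omega, ?_⟩
        show 0 < m (0 + 1)
        omega
    | succ i hi ih =>
      have hKSi := hKS i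
      by_cases hc : m (K i + 1) ≤ i + 1
      · rw [if_pos hc] at hKSi
        rw [hKSi]
        have h1 := hmlt (K i + 1)
        exact ⟨hc, by omega⟩
      · rw [if_neg hc] at hKSi
        rw [hKSi]
        exact ⟨by omega, by omega⟩
  have hKuniq : ∀ i k, i0 ≤ i → m k ≤ i → i < m (k + 1) → K i = k := by
    intro i k hi h1 h2
    obtain ⟨h3, h4⟩ := hKinv i hi
    rcases Nat.lt_trichotomy (K i) k with h | h | h
    · have h5 : m (K i + 1) ≤ m k := hmle _ _ h
      omega
    · exact h
    · have h5 : m (k + 1) ≤ m (K i) := hmle _ _ h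
      omega
  have hmi0 : ∀ k, i0 ≤ m k := fun k => hm0 ▸ hmle 0 k (Nat.zero_le k)
  have hKm : ∀ k, K (m k) = k := fun k =>
    hKuniq (m k) k (hmi0 k) (le_refl _) (hmlt k)
  -- the transferred trace
  set τ' : ℕ → Fm := fun i => if i = m (K i) then τ (K i) else τ (K i + 1) with hτ'def
  have hτ'm : ∀ k, τ' (m k) = τ k := by
    intro k
    show (if m k = m (K (m k)) then τ (K (m k)) else τ (K (m k) + 1)) = τ k
    rw [hKm k, if_pos rfl]
  have hτ'mid : ∀ k, m (k + 1) = m k + 2 → τ' (m k + 1) = τ (k + 1) := by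
    intro k hm2
    have hK1 : K (m k + 1) = k :=
      hKuniq (m k + 1) k (by have := hmi0 k; omega) (by omega) (by omega)
    show (if m k + 1 = m (K (m k + 1)) then τ (K (m k + 1)) else τ (K (m k + 1) + 1)) =
      τ (k + 1)
    rw [hK1, if_neg (by omega)]
  -- identification of the step index used in the trace
  have hjq : ∀ k (j : ℕ), q (k + 1) = q k ++ [j] →
      j = if (vv (m k + 1)).2 = true then 0 else n (m k) := by
    intro k j hj
    rw [hqS k] at hj
    have h1 := List.append_cancel_left hj
    injection h1 with h2 _
    exact h2.symm
  refine ⟨m k₀, τ', ?_, ?_⟩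
  · -- trace condition
    intro i hi
    have hii0 : i0 ≤ i := le_trans (hmi0 k₀) hi
    obtain ⟨hk1, hk2⟩ := hKinv i hii0
    set k := K i with hkdef
    have hkk0 : k₀ ≤ k := by
      by_contra hc
      push_neg at hc
      have h6 : k + 1 ≤ k₀ := hc
      have h7 := hmle _ _ h6
      have h5 : m k₀ ≤ i := hi
      omega
    obtain ⟨S, r, j, hTqk, hmem, hind, hqs, hconn⟩ := htr k hkk0
    have hDk : P.D.label ((vv (m k)).1) = some (S, r) := by rw [← hTq k]; exact hTqk
    have hjeq := hjq k j hqs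
    by_cases hf : (vv (m k + 1)).2 = true
    · -- detour case
      have hm2 : m (k + 1) = m k + 2 := by rw [hmS k, if_pos hf]
      have hs1 := hstep (m k)
      rcases vstep_false_spec' P (hflm k) hs1 with
        ⟨S1, a, b, c, d, hσ, hn0, hw⟩ | ⟨_, _, hw2⟩
      · rw [hDk] at hσ
        injection hσ with hσ
        injection hσ with hσS hσr
        rcases Nat.lt_or_ge i (m k + 1) with hic | hic
        · -- i = m k : the (= L_a) step
          have hieq : i = m k := by omega
          obtain ⟨S2, hS2, hT2⟩ := T'_some P (hvv i)
          have hS2' : S2 = S := by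
            have h8 := vSeq_false P (hflm k) hDk
            rw [hieq, h8] at hS2
            injection hS2 with h
            exact h.symm
          have hvr : vRule P (vv i) = Rule.eqLa a b c d := by
            rw [hieq, vRule_false P (hflm k) hDk, hσr]
            rfl
          have ht1 : τ' i = τ k := by rw [hieq]; exact hτ'm k
          have ht2 : τ' (i + 1) = τ (k + 1) := by rw [hieq]; exact hτ'mid k hm2
          refine ⟨S, Rule.eqLa a b c d, n i, ?_, ?_, ?_, hn i, ?_⟩
          · rw [hT2, hS2', hvr]
          · rw [ht1]; exact hmem
          · rw [ht1]; exact hind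
          · rw [ht1, ht2]
            rw [hσr] at hconn
            exact hconn
        · -- i = m k + 1 : the weakening step
          have hieq : i = m k + 1 := by omega
          have hvvi : vv i = ((vv (m k)).1, true) := by rw [hieq, hw]
          obtain ⟨hn1, hgo2, _⟩ := vstep_true_spec' P (by rw [hvvi]) (hstep i)
          rw [hvvi] at hgo2
          simp only at hgo2
          obtain ⟨S0, r0, r0', hlb0, hlbw, hrb', hwf'⟩ := goChild_spec P hgo2
          have hσi : P.D.label ((vv i).1) = some (S, Rule.eqL a b c d) := by
            rw [hvvi]
            show P.D.label ((vv (m k)).1) = _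
            rw [hDk, hσr]
          have h0i : P.D.label ((vv i).1 ++ [0]) = some (S0, r0) := by
            rw [hvvi]
            exact hlb0
          have hseqT : vSeq P (vv i) = some ⟨insert (Fm.eq c d) S0.ant, S0.suc⟩ :=
            vSeq_true P (by rw [hvvi]) hσi h0i
          obtain ⟨S2, hS2, hT2⟩ := T'_some P (hvv i)
          rw [hseqT] at hS2
          injection hS2 with hS2
          have hvr : vRule P (vv i) = Rule.weak := vRule_true P (by rw [hvvi])
          obtain ⟨S3, r3, j3, hTqk3, hmem3, hind3, _, _⟩ := htr (k + 1) (by omega)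
          have hDk3 : P.D.label ((vv (m (k + 1))).1) = some (S3, r3) := by
            rw [← hTq (k + 1)]; exact hTqk3
          have hS3 : S3 = S0 := by
            have h9 : (vv (m (k + 1))) = vv (i + 1) := by rw [hm2, hieq]
            rw [h9] at hDk3
            rw [hlbw] at hDk3
            injection hDk3 with h
            injection h with h10 _
            exact h10.symm
          have ht1 : τ' i = τ (k + 1) := by rw [hieq]; exact hτ'mid k hm2
          have ht2 : τ' (i + 1) = τ (k + 1) := by
            have h11 : i + 1 = m (k + 1) := by omega
            rw [h11]
            exact hτ'm (k + 1)
          refine ⟨⟨insert (Fm.eq c d) S0.ant, S0.suc⟩, Rule.weak, n i, ?_, ?_, ?_, hn i, ?_⟩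
          · rw [hT2, ← hS2, hvr]
          · rw [ht1]
            apply Finset.mem_insert_of_mem
            rw [hS3] at hmem3
            exact hmem3
          · rw [ht1]
            exact hind3
          · show τ' (i + 1) = τ' i
            rw [ht1, ht2]
      · rw [hw2] at hf
        exact absurd hf (by simp)
    · -- direct case
      have hm1 : m (k + 1) = m k + 1 := by rw [hmS k, if_neg hf]
      have hieq : i = m k := by omega
      have hs1 := hstep (m k)
      rcases vstep_false_spec' P (hflm k) hs1 with
        ⟨S1, a, b, c, d, hσ, hn0, hw⟩ | ⟨⟨S1, r1, hσ1, hner⟩, hgo, hw2⟩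
      · rw [hw] at hf
        exact absurd rfl hf
      · have hrr : r1 = r := by
          rw [hDk] at hσ1
          injection hσ1 with h
          injection h with _ h2
          exact h2.symm
        rw [hrr] at hner
        obtain ⟨S2, hS2, hT2⟩ := T'_some P (hvv i)
        have hS2' : S2 = S := by
          have h8 := vSeq_false P (hflm k) hDk
          rw [hieq, h8] at hS2
          injection hS2 with h
          exact h.symm
        have hvr : vRule P (vv i) = r := by
          rw [hieq, vRule_false P (hflm k) hDk]
          exact convert_eq_self hner
        have hjn : j = n (m k) := by rw [hjeq, if_neg hf]
        have ht1 : τ' i = τ k := by rw [hieq]; exact hτ'm k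
        have ht2 : τ' (i + 1) = τ (k + 1) := by
          have h11 : i + 1 = m (k + 1) := by omega
          rw [h11]
          exact hτ'm (k + 1)
        refine ⟨S, r, n i, ?_, ?_, ?_, hn i, ?_⟩
        · rw [hT2, hS2', hvr]
        · rw [ht1]; exact hmem
        · rw [ht1]; exact hind
        · rw [ht1, ht2, hieq, ← hjn]
          exact hconn
  · -- infinitely many progress points
    intro N
    obtain ⟨k, hk1, hk2, hpg⟩ := hprog N
    obtain ⟨S, r, j, hTqk, hqs, hps⟩ := hpg
    have hDk : P.D.label ((vv (m k)).1) = some (S, r) := by rw [← hTq k]; exact hTqk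
    have hner := progStep_not_eqL hps
    have hjeq := hjq k j hqs
    have hf : (vv (m k + 1)).2 = false := by
      have hs1 := hstep (m k)
      rcases vstep_false_spec' P (hflm k) hs1 with
        ⟨S1, a, b, c, d, hσ, _, _⟩ | ⟨_, _, hw2⟩
      · rw [hDk] at hσ
        injection hσ with h
        injection h with _ h2
        exact absurd h2 (hner a b c d)
      · exact hw2
    have hf' : ¬ ((vv (m k + 1)).2 = true) := by rw [hf]; simp
    have hm1 : m (k + 1) = m k + 1 := by rw [hmS k, if_neg hf']
    have hjn : j = n (m k) := by rw [hjeq, if_neg hf']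
    refine ⟨m k, le_trans hk1 (hkm k), hmle _ _ hk2, ?_⟩
    obtain ⟨S2, hS2, hT2⟩ := T'_some P (hvv (m k))
    have hS2' : S2 = S := by
      have h8 := vSeq_false P (hflm k) hDk
      rw [h8] at hS2
      injection hS2 with h
      exact h.symm
    have hvr : vRule P (vv (m k)) = r := by
      rw [vRule_false P (hflm k) hDk]
      exact convert_eq_self hner
    have ht1 : τ' (m k) = τ k := hτ'm k
    have ht2 : τ' (m k + 1) = τ (k + 1) := by
      rw [← hm1]
      exact hτ'm (k + 1)
    refine ⟨S, r, n (m k), by rw [hT2, hS2', hvr], hn (m k), ?_⟩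
    rw [ht1, ht2, ← hjn]
    exact hps

lemma P'_isProof (h : P.IsProof) : (P' P).IsProof := by
  obtain ⟨T, hU, hG⟩ := h
  exact ⟨T' P, T'_isUnfolding P, T'_GTC P T hU hG⟩

end CNAux

/-- If `Γ ⊢ Δ` has a cut-free `CLKID^ω` proof, then it has a
    cut-free cycle-normal `CLKID^ω_a` proof. -/
theorem cutfree_to_cutfree_cyclenormal_a (S : Seq)
    (h : ∃ P : PreProof, P.IsProof ∧ P.CutFree ∧ P.NoEqLa ∧ P.Concl S) :
    ∃ P' : PreProof, P'.IsProof ∧ P'.CutFree ∧ P'.NoEqL ∧ P'.CycleNormal ∧ P'.Concl S := by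
  obtain ⟨P, hproof, hcut, _, hconcl⟩ := h
  exact ⟨CNAux.P' P, CNAux.P'_isProof P hproof, CNAux.P'_cutFree P hcut,
    CNAux.P'_noEqL P, CNAux.P'_cycleNormal P, CNAux.P'_concl P hconcl⟩

end CLKID
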